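/- Let m, n be positive naturals, r = min(m, n), and let F : ℝ^{m×n} → ℝ be differentiable with L-Lipschitz gradient with respect to the Frobenius norm and bounded below by F*. Let T ≥ 1, η > 0, and 0 ≤ λ ≤ 1/(2(1+T)·η·√r). Let W₀, …, W_{T+1} and M₁, …, M_{T+1} be real m×n matrices with ‖W₀‖_F ≤ η·√r, and for each 1 ≤ t ≤ T+1 suppose W_t = (1 − ηλ)·W_{t−1} − η·U_t·V_tᵀ where U_t is an m×r matrix with U_tᵀU_t = I_r, V_t is an n×r matrix with V_tᵀV_t = I_r, and ⟨M_t, U_t·V_tᵀ⟩ = ‖M_t‖_*. Then (1/(T+1))·Σ_{t=0}^{T} ‖∇F(W_t)‖_F ≤ 2·(F(W₀) − F*)/(T·η) + (4√r/(T+1))·Σ_{t=0}^{T} ‖∇F(W_t) − M_{t+1}‖_F + L·η·(√r + 1/2)². -/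

import Mathlib

open Matrix

/-- Frobenius norm of a real matrix: `√ tr(Aᵀ A)`. -/
noncomputable def frobNorm {m n : ℕ} (A : Matrix (Fin m) (Fin n) ℝ) : ℝ :=
  Real.sqrt ((Aᵀ * A).trace)

/-- Nuclear norm of a real matrix: the trace of the positive semidefinite
square root of `MᵀM` (over `ℝ`, `Mᴴ = Mᵀ`). -/
noncomputable def nuclearNorm {m n : ℕ} (M : Matrix (Fin m) (Fin n) ℝ) : ℝ :=
  (((Matrix.posSemidef_conjTranspose_mul_self M).1.eigenvectorUnitary : Matrix (Fin n) (Fin n) ℝ) *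
    diagonal (RCLike.ofReal ∘ Real.sqrt ∘ (Matrix.posSemidef_conjTranspose_mul_self M).1.eigenvalues) *
    (star (Matrix.posSemidef_conjTranspose_mul_self M).1.eigenvectorUnitary : Matrix (Fin n) (Fin n) ℝ)).trace

attribute [local instance] Matrix.frobeniusNormedAddCommGroup Matrix.frobeniusNormedSpace

/-- The continuous linear functional `W ↦ ⟨G, W⟩ = tr(Gᵀ·W)` given by the
Frobenius inner product with `G`. -/
noncomputable def frobInnerCLM {m n : ℕ} (G : Matrix (Fin m) (Fin n) ℝ) :
    Matrix (Fin m) (Fin n) ℝ →L[ℝ] ℝ :=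
  LinearMap.toContinuousLinearMap
    { toFun := fun W => (Gᵀ * W).trace
      map_add' := by intro a b; simp [Matrix.mul_add]
      map_smul' := by intro c a; simp [Matrix.mul_smul] }

/-! ### Auxiliary lemmas -/

lemma muon_trace_tmul {m n : ℕ} (A B : Matrix (Fin m) (Fin n) ℝ) :
    (Aᵀ * B).trace = ∑ i, ∑ j, A i j * B i j := by
  simp [Matrix.trace, Matrix.mul_apply, Matrix.diag]
  rw [Finset.sum_comm]

lemma muon_frobNorm_eq_sqrt {m n : ℕ} (A : Matrix (Fin m) (Fin n) ℝ) :
    frobNorm A = Real.sqrt (∑ i, ∑ j, A i j ^ 2) := by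
  rw [frobNorm, muon_trace_tmul]; congr 1; simp [sq]

lemma muon_frobNorm_eq_norm {m n : ℕ} (A : Matrix (Fin m) (Fin n) ℝ) :
    frobNorm A = ‖A‖ := by
  rw [muon_frobNorm_eq_sqrt, Matrix.frobenius_norm_def, Real.sqrt_eq_rpow]
  congr 1
  congr 1 with i
  congr 1 with j
  rw [Real.rpow_two, Real.norm_eq_abs, sq_abs]

lemma muon_frobNorm_nonneg {m n : ℕ} (A : Matrix (Fin m) (Fin n) ℝ) :
    0 ≤ frobNorm A := Real.sqrt_nonneg _

lemma muon_ip_cauchy {m n : ℕ} (A B : Matrix (Fin m) (Fin n) ℝ) :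
    (Aᵀ * B).trace ≤ frobNorm A * frobNorm B := by
  rw [muon_trace_tmul, muon_frobNorm_eq_sqrt, muon_frobNorm_eq_sqrt]
  have h := Real.sum_mul_le_sqrt_mul_sqrt (Finset.univ : Finset (Fin m × Fin n))
    (fun p => A p.1 p.2) (fun p => B p.1 p.2)
  simpa only [Fintype.sum_prod_type] using h

lemma muon_ip_abs_cauchy {m n : ℕ} (A B : Matrix (Fin m) (Fin n) ℝ) :
    |(Aᵀ * B).trace| ≤ frobNorm A * frobNorm B := by
  rw [abs_le]
  constructor
  · have h := muon_ip_cauchy (-A) B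
    have hn : frobNorm (-A) = frobNorm A := by
      rw [muon_frobNorm_eq_norm, muon_frobNorm_eq_norm, norm_neg]
    rw [hn] at h
    have : ((-A)ᵀ * B).trace = -((Aᵀ * B).trace) := by
      simp [Matrix.transpose_neg, Matrix.neg_mul]
    linarith [this ▸ h]
  · exact muon_ip_cauchy A B

lemma muon_frobNorm_UV {m n r : ℕ} (U : Matrix (Fin m) (Fin r) ℝ) (V : Matrix (Fin n) (Fin r) ℝ)
    (hU : Uᵀ * U = 1) (hV : Vᵀ * V = 1) : frobNorm (U * Vᵀ) = Real.sqrt r := by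
  rw [frobNorm]
  congr 1
  have h : (U * Vᵀ)ᵀ * (U * Vᵀ) = V * Vᵀ := by
    rw [Matrix.transpose_mul, Matrix.transpose_transpose, Matrix.mul_assoc,
      ← Matrix.mul_assoc Uᵀ, hU, Matrix.one_mul]
  rw [h, Matrix.trace_mul_comm, hV, Matrix.trace_one]
  simp

lemma muon_aux_trace {k : ℕ} (u : Matrix (Fin k) (Fin k) ℝ) (f : Fin k → ℝ)
    (hu : star u * u = 1) :
    (u * diagonal f * star u).trace = ∑ i, f i := by
  rw [Matrix.trace_mul_cycle, hu, Matrix.one_mul, Matrix.trace_diagonal]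

lemma muon_aux_trace_sq {k : ℕ} (u : Matrix (Fin k) (Fin k) ℝ) (f : Fin k → ℝ)
    (hu : star u * u = 1) :
    ((u * diagonal f * star u) * (u * diagonal f * star u)).trace = ∑ i, f i ^ 2 := by
  have h1 : (u * diagonal f * star u) * (u * diagonal f * star u)
      = u * diagonal f * (star u * u) * diagonal f * star u := by noncomm_ring
  rw [h1, hu, Matrix.mul_one, Matrix.trace_mul_cycle, ← Matrix.mul_assoc, hu, Matrix.one_mul,
    Matrix.diagonal_mul_diagonal, Matrix.trace_diagonal]
  simp [sq]

lemma muon_trace_sq_le_sq_trace {k : ℕ} {S : Matrix (Fin k) (Fin k) ℝ} (hS : S.PosSemidef) :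
    (S * S).trace ≤ S.trace ^ 2 := by
  have herm := hS.1
  have hU : star (herm.eigenvectorUnitary : Matrix (Fin k) (Fin k) ℝ) *
      (herm.eigenvectorUnitary : Matrix (Fin k) (Fin k) ℝ) = 1 :=
    Unitary.star_mul_self_of_mem herm.eigenvectorUnitary.2
  have hspec := herm.spectral_theorem
  have htrS : S.trace = ∑ i, herm.eigenvalues i := by
    rw [congrArg Matrix.trace hspec, Unitary.conjStarAlgAut_apply, muon_aux_trace _ _ hU]
    simp
  have htrSS : (S * S).trace = ∑ i, herm.eigenvalues i ^ 2 := by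
    rw [congrArg Matrix.trace (congrArg₂ (· * ·) hspec hspec), Unitary.conjStarAlgAut_apply, muon_aux_trace_sq _ _ hU]
    simp
  rw [htrS, htrSS]
  exact Finset.sum_sq_le_sq_sum_of_nonneg (fun i _ => hS.eigenvalues_nonneg i)

lemma muon_psd_trace_nonneg {k : ℕ} {S : Matrix (Fin k) (Fin k) ℝ} (hS : S.PosSemidef) :
    0 ≤ S.trace := by
  rw [Matrix.trace]
  refine Finset.sum_nonneg fun i _ => ?_
  exact hS.diag_nonneg

lemma muon_frob_le_nuclear {m n : ℕ} (M : Matrix (Fin m) (Fin n) ℝ) :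
    frobNorm M ≤ nuclearNorm M := by
  have hP := Matrix.posSemidef_conjTranspose_mul_self M
  have herm := hP.1
  have hU : star (herm.eigenvectorUnitary : Matrix (Fin n) (Fin n) ℝ) *
      (herm.eigenvectorUnitary : Matrix (Fin n) (Fin n) ℝ) = 1 :=
    Unitary.star_mul_self_of_mem herm.eigenvectorUnitary.2
  have hMt : Mᴴ = Mᵀ := Matrix.conjTranspose_eq_transpose_of_trivial M
  have htr : (Mᵀ * M).trace = ∑ i, herm.eigenvalues i := by
    rw [← hMt, congrArg Matrix.trace herm.spectral_theorem, Unitary.conjStarAlgAut_apply,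
      muon_aux_trace _ _ hU]
    simp
  have hnuc : nuclearNorm M = ∑ i, Real.sqrt (herm.eigenvalues i) := by
    rw [nuclearNorm, muon_aux_trace _ _ hU]
    simp
  have he : ∀ i, 0 ≤ herm.eigenvalues i := fun i => hP.eigenvalues_nonneg i
  have hsum : ∑ i, herm.eigenvalues i = ∑ i, Real.sqrt (herm.eigenvalues i) ^ 2 :=
    Finset.sum_congr rfl fun i _ => (Real.sq_sqrt (he i)).symm
  rw [frobNorm, htr, hnuc, hsum]
  calc Real.sqrt (∑ i, Real.sqrt (herm.eigenvalues i) ^ 2)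
      ≤ Real.sqrt ((∑ i, Real.sqrt (herm.eigenvalues i)) ^ 2) :=
        Real.sqrt_le_sqrt (Finset.sum_sq_le_sq_sum_of_nonneg fun i _ => Real.sqrt_nonneg _)
    _ = ∑ i, Real.sqrt (herm.eigenvalues i) :=
        Real.sqrt_sq (Finset.sum_nonneg fun i _ => Real.sqrt_nonneg _)

lemma muon_descent1d (g g' : ℝ → ℝ) (K : ℝ)
    (hd : ∀ s, HasDerivAt g (g' s) s)
    (hl : ∀ s t : ℝ, |g' s - g' t| ≤ K * |s - t|) :
    g 1 ≤ g 0 + g' 0 + K / 2 := by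
  set h : ℝ → ℝ := fun s => g s - g 0 - s * g' 0 - K * s ^ 2 / 2 with hh
  have hd' : ∀ s, HasDerivAt h (g' s - g' 0 - K * s) s := by
    intro s
    have h1 : HasDerivAt (fun s : ℝ => g s - g 0) (g' s) s := (hd s).sub_const _
    have h2 : HasDerivAt (fun s : ℝ => s * g' 0) (g' 0) s := by
      simpa using (hasDerivAt_id s).mul_const (g' 0)
    have h3 : HasDerivAt (fun s : ℝ => K * s ^ 2 / 2) (K * s) s := by
      have := ((hasDerivAt_pow 2 s).const_mul K).div_const 2
      simpa [mul_comm, mul_assoc, mul_div_assoc] using this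
    exact (h1.sub h2).sub h3
  have hanti : AntitoneOn h (Set.Icc 0 1) := by
    apply antitoneOn_of_deriv_nonpos (convex_Icc 0 1)
    · have : Differentiable ℝ h := fun s => (hd' s).differentiableAt
      exact this.continuous.continuousOn
    · intro x _
      exact ((hd' x).differentiableAt).differentiableWithinAt
    · intro x hx
      rw [(hd' x).deriv]
      rw [interior_Icc] at hx
      have hxpos : 0 < x := hx.1
      have habs := hl x 0
      rw [sub_zero] at habs
      have h1 : g' x - g' 0 ≤ |g' x - g' 0| := le_abs_self _
      have h2 : |g' x - g' 0| ≤ K * x := by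
        calc |g' x - g' 0| ≤ K * |x| := habs
          _ = K * x := by rw [abs_of_pos hxpos]
      linarith
  have h10 : h 1 ≤ h 0 := hanti (by simp) (by norm_num) (by norm_num)
  simp only [hh] at h10
  norm_num at h10
  linarith

lemma muon_frobNorm_smul {m n : ℕ} (c : ℝ) (A : Matrix (Fin m) (Fin n) ℝ) :
    frobNorm (c • A) = |c| * frobNorm A := by
  rw [muon_frobNorm_eq_norm, muon_frobNorm_eq_norm, norm_smul, Real.norm_eq_abs]

lemma muon_descent {m n : ℕ} (F : Matrix (Fin m) (Fin n) ℝ → ℝ)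
    (gradF : Matrix (Fin m) (Fin n) ℝ → Matrix (Fin m) (Fin n) ℝ) (L : ℝ)
    (hdiff : ∀ X, HasFDerivAt F (frobInnerCLM (gradF X)) X)
    (hLip : ∀ X Y, frobNorm (gradF X - gradF Y) ≤ L * frobNorm (X - Y))
    (X D : Matrix (Fin m) (Fin n) ℝ) :
    F (X + D) ≤ F X + ((gradF X)ᵀ * D).trace + L * frobNorm D ^ 2 / 2 := by
  set g' : ℝ → ℝ := fun s => ((gradF (X + s • D))ᵀ * D).trace with hg'
  have hline : ∀ s : ℝ, HasDerivAt (fun s : ℝ => X + s • D) D s := by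
    intro s
    have := ((hasDerivAt_id s).smul_const D).const_add X
    rw [one_smul] at this
    exact this
  have hg : ∀ s, HasDerivAt (fun s : ℝ => F (X + s • D)) (g' s) s := by
    intro s
    exact (hdiff (X + s • D)).comp_hasDerivAt s (hline s)
  have hl : ∀ s t : ℝ, |g' s - g' t| ≤ (L * frobNorm D ^ 2) * |s - t| := by
    intro s t
    have hdiffst : (X + s • D) - (X + t • D) = (s - t) • D := by
      rw [sub_smul]; abel
    have heq : g' s - g' t = (((gradF (X + s • D)) - (gradF (X + t • D)))ᵀ * D).trace := by
      simp [hg', Matrix.transpose_sub, Matrix.sub_mul]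
    rw [heq]
    have hc := muon_ip_abs_cauchy ((gradF (X + s • D)) - (gradF (X + t • D))) D
    have hlip := hLip (X + s • D) (X + t • D)
    rw [hdiffst, muon_frobNorm_smul] at hlip
    have hD0 := muon_frobNorm_nonneg D
    calc |(((gradF (X + s • D)) - (gradF (X + t • D)))ᵀ * D).trace|
        ≤ frobNorm ((gradF (X + s • D)) - (gradF (X + t • D))) * frobNorm D := hc
      _ ≤ (L * (|s - t| * frobNorm D)) * frobNorm D :=
          mul_le_mul_of_nonneg_right hlip hD0
      _ = (L * frobNorm D ^ 2) * |s - t| := by ring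
  have h := muon_descent1d (fun s : ℝ => F (X + s • D)) g' (L * frobNorm D ^ 2) hg hl
  have h0 : g' 0 = ((gradF X)ᵀ * D).trace := by simp [hg']
  rw [h0] at h
  simpa using h

set_option maxHeartbeats 2000000 in
/-- Deterministic (trajectory-wise) convergence bound for Muon/MiMuon
(the paper's Theorem 3 with the momentum-approximation error kept explicit). -/
theorem stmt_11 {m n : ℕ} (hm : 0 < m) (hn : 0 < n) (r : ℕ) (hr : r = min m n)
    (F : Matrix (Fin m) (Fin n) ℝ → ℝ)
    (gradF : Matrix (Fin m) (Fin n) ℝ → Matrix (Fin m) (Fin n) ℝ) (L Fstar : ℝ)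
    (hdiff : ∀ X, HasFDerivAt F (frobInnerCLM (gradF X)) X)
    (hLip : ∀ X Y, frobNorm (gradF X - gradF Y) ≤ L * frobNorm (X - Y))
    (hFstar : ∀ X, Fstar ≤ F X)
    (T : ℕ) (hT : 1 ≤ T) (η lam : ℝ) (hη : 0 < η)
    (hlam0 : 0 ≤ lam) (hlam : lam ≤ 1 / (2 * (1 + (T : ℝ)) * η * Real.sqrt r))
    (W M : ℕ → Matrix (Fin m) (Fin n) ℝ)
    (U : ℕ → Matrix (Fin m) (Fin r) ℝ) (V : ℕ → Matrix (Fin n) (Fin r) ℝ)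
    (hW0 : frobNorm (W 0) ≤ η * Real.sqrt r)
    (hU : ∀ t, 1 ≤ t → t ≤ T + 1 → (U t)ᵀ * U t = 1)
    (hV : ∀ t, 1 ≤ t → t ≤ T + 1 → (V t)ᵀ * V t = 1)
    (hMUV : ∀ t, 1 ≤ t → t ≤ T + 1 → ((M t)ᵀ * (U t * (V t)ᵀ)).trace = nuclearNorm (M t))
    (hrec : ∀ t, 1 ≤ t → t ≤ T + 1 →
      W t = (1 - η * lam) • W (t - 1) - η • (U t * (V t)ᵀ)) :
    (1 / ((T : ℝ) + 1)) * ∑ t ∈ Finset.range (T + 1), frobNorm (gradF (W t)) ≤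
      2 * (F (W 0) - Fstar) / ((T : ℝ) * η) +
      (4 * Real.sqrt r / ((T : ℝ) + 1)) *
        ∑ t ∈ Finset.range (T + 1), frobNorm (gradF (W t) - M (t + 1)) +
      L * η * (Real.sqrt r + 1 / 2) ^ 2 := by
  have hr1 : 1 ≤ r := by omega
  set sr : ℝ := Real.sqrt r with hsr
  have hsr1 : 1 ≤ sr := by
    rw [hsr]
    rw [show (1:ℝ) = Real.sqrt 1 by simp]
    exact Real.sqrt_le_sqrt (by exact_mod_cast hr1)
  have hsr0 : 0 < sr := lt_of_lt_of_le one_pos hsr1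
  have hTr : (1:ℝ) ≤ (T:ℝ) := by exact_mod_cast hT
  -- L is nonnegative
  have hL0 : 0 ≤ L := by
    have hE : frobNorm ((Matrix.single (⟨0, hm⟩ : Fin m) (⟨0, hn⟩ : Fin n) (1:ℝ)) - 0)
        = 1 := by
      rw [sub_zero, muon_frobNorm_eq_sqrt]
      have hsum : (∑ i, ∑ j,
          (Matrix.single (⟨0, hm⟩ : Fin m) (⟨0, hn⟩ : Fin n) (1:ℝ)) i j ^ 2) = 1 := by
        simp [Matrix.single, ite_and, ite_pow, Finset.sum_ite_eq]
      rw [hsum, Real.sqrt_one]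
    have h := hLip (Matrix.single (⟨0, hm⟩ : Fin m) (⟨0, hn⟩ : Fin n) (1:ℝ)) 0
    rw [hE, mul_one] at h
    exact le_trans (muon_frobNorm_nonneg _) h
  -- eta * lam is small
  have hden : 0 < 2 * (1 + (T:ℝ)) * η * sr := by positivity
  have hetalam : η * lam ≤ 1 / 2 := by
    have h1 : η * lam ≤ η * (1 / (2 * (1 + (T:ℝ)) * η * sr)) :=
      mul_le_mul_of_nonneg_left hlam hη.le
    have h2 : η * (1 / (2 * (1 + (T:ℝ)) * η * sr)) = 1 / (2 * (1 + (T:ℝ)) * sr) := by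
      field_simp
    rw [h2] at h1
    have h3 : (2:ℝ) ≤ 2 * (1 + (T:ℝ)) * sr := by nlinarith
    calc η * lam ≤ 1 / (2 * (1 + (T:ℝ)) * sr) := h1
      _ ≤ 1 / 2 := by
        apply one_div_le_one_div_of_le
        · norm_num
        · exact h3
  -- bound on the iterates
  have hWb : ∀ t : ℕ, t ≤ T + 1 → frobNorm (W t) ≤ ((t:ℝ) + 1) * (η * sr) := by
    intro t
    induction t with
    | zero =>
      intro _
      simpa using hW0
    | succ k ih =>
      intro hk
      have hk' : k ≤ T + 1 := by omega
      have hWk1 : W (k+1) = (1 - η * lam) • W k - η • (U (k+1) * (V (k+1))ᵀ) := by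
        have := hrec (k+1) (by omega) hk
        simpa using this
      have hP : frobNorm (U (k+1) * (V (k+1))ᵀ) = sr :=
        muon_frobNorm_UV _ _ (hU (k+1) (by omega) hk) (hV (k+1) (by omega) hk)
      have h1 : frobNorm (W (k+1)) ≤ |1 - η * lam| * frobNorm (W k) + |η| * sr := by
        rw [hWk1, muon_frobNorm_eq_norm]
        calc ‖(1 - η * lam) • W k - η • (U (k+1) * (V (k+1))ᵀ)‖
            ≤ ‖(1 - η * lam) • W k‖ + ‖η • (U (k+1) * (V (k+1))ᵀ)‖ := norm_sub_le _ _
          _ = |1 - η * lam| * ‖W k‖ + |η| * ‖U (k+1) * (V (k+1))ᵀ‖ := by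
              rw [norm_smul, norm_smul, Real.norm_eq_abs, Real.norm_eq_abs]
          _ = |1 - η * lam| * frobNorm (W k) + |η| * sr := by
              rw [← muon_frobNorm_eq_norm, ← muon_frobNorm_eq_norm, hP]
      have habs1 : |1 - η * lam| = 1 - η * lam := abs_of_nonneg (by linarith)
      have habs2 : |η| = η := abs_of_pos hη
      rw [habs1, habs2] at h1
      have hWk0 := muon_frobNorm_nonneg (W k)
      have hik := ih (by omega)
      have hetalam0 : 0 ≤ η * lam := mul_nonneg hη.le hlam0
      have hes : 0 ≤ η * sr := by positivity
      push_cast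
      nlinarith [mul_le_mul_of_nonneg_left hik (by linarith : (0:ℝ) ≤ 1 - η * lam)]
  -- lam * ||W t|| <= 1/2 for t <= T
  have hlamW : ∀ t : ℕ, t ≤ T → lam * frobNorm (W t) ≤ 1 / 2 := by
    intro t ht
    have h1 : frobNorm (W t) ≤ ((T:ℝ) + 1) * (η * sr) := by
      refine le_trans (hWb t (by omega)) ?_
      have : (t:ℝ) ≤ (T:ℝ) := by exact_mod_cast ht
      nlinarith
    have h2 : lam * frobNorm (W t) ≤ (1 / (2 * (1 + (T:ℝ)) * η * sr)) * (((T:ℝ) + 1) * (η * sr)) :=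
      mul_le_mul hlam h1 (muon_frobNorm_nonneg _) (by positivity)
    have h3 : (1 / (2 * (1 + (T:ℝ)) * η * sr)) * (((T:ℝ) + 1) * (η * sr)) = 1 / 2 := by
      field_simp
      ring
    linarith [h3 ▸ h2]
  -- the one-step descent estimate
  have hstep : ∀ k : ℕ, k ≤ T →
      F (W (k+1)) ≤ F (W k) - η / 2 * frobNorm (gradF (W k))
        + η * (1 + sr) * frobNorm (gradF (W k) - M (k+1))
        + L * (η * (sr + 1/2)) ^ 2 / 2 := by
    intro k hk
    set G := gradF (W k) with hG
    set P := U (k+1) * (V (k+1))ᵀ with hPdef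
    have hP : frobNorm P = sr :=
      muon_frobNorm_UV _ _ (hU (k+1) (by omega) (by omega)) (hV (k+1) (by omega) (by omega))
    have hWk1 : W (k+1) = (1 - η * lam) • W k - η • P := by
      have := hrec (k+1) (by omega) (by omega)
      simpa using this
    set D : Matrix (Fin m) (Fin n) ℝ := (-(η * lam)) • W k + (-η) • P with hD
    have hXD : W k + D = W (k+1) := by
      rw [hWk1, hD]
      module
    have hdes := muon_descent F gradF L hdiff hLip (W k) D
    rw [hXD] at hdes
    have hip : (Gᵀ * D).trace = (-(η * lam)) * (Gᵀ * W k).trace + (-η) * (Gᵀ * P).trace := by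
      rw [hD]
      simp [Matrix.mul_add, Matrix.mul_smul]
    -- first term
    have h1 : (-(η * lam)) * (Gᵀ * W k).trace ≤ η / 2 * frobNorm G := by
      have hc := muon_ip_abs_cauchy G (W k)
      have hlw := hlamW k hk
      have hfG := muon_frobNorm_nonneg G
      have hfW := muon_frobNorm_nonneg (W k)
      have hb : -(Gᵀ * W k).trace ≤ frobNorm G * frobNorm (W k) := by
        have := neg_abs_le ((Gᵀ * W k).trace)
        linarith [hc]
      have he : 0 ≤ η := hη.le
      calc (-(η * lam)) * (Gᵀ * W k).trace = (η * lam) * (-(Gᵀ * W k).trace) := by ring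
        _ ≤ (η * lam) * (frobNorm G * frobNorm (W k)) :=
            mul_le_mul_of_nonneg_left hb (mul_nonneg he hlam0)
        _ = (η * frobNorm G) * (lam * frobNorm (W k)) := by ring
        _ ≤ (η * frobNorm G) * (1 / 2) :=
            mul_le_mul_of_nonneg_left hlw (mul_nonneg he hfG)
        _ = η / 2 * frobNorm G := by ring
    -- second term
    have h2 : (-η) * (Gᵀ * P).trace ≤
        -(η * frobNorm G) + η * (1 + sr) * frobNorm (G - M (k+1)) := by
      have hsplit : (Gᵀ * P).trace = ((G - M (k+1))ᵀ * P).trace + ((M (k+1))ᵀ * P).trace := by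
        simp [Matrix.transpose_sub, Matrix.sub_mul]
      have hc := muon_ip_abs_cauchy (G - M (k+1)) P
      rw [hP] at hc
      have hlow : -(frobNorm (G - M (k+1)) * sr) ≤ ((G - M (k+1))ᵀ * P).trace := by
        have := neg_abs_le (((G - M (k+1))ᵀ * P).trace)
        linarith
      have hnuc : ((M (k+1))ᵀ * P).trace = nuclearNorm (M (k+1)) :=
        hMUV (k+1) (by omega) (by omega)
      have hfn := muon_frob_le_nuclear (M (k+1))
      have htri : frobNorm G ≤ frobNorm (M (k+1)) + frobNorm (G - M (k+1)) := by
        rw [muon_frobNorm_eq_norm, muon_frobNorm_eq_norm, muon_frobNorm_eq_norm]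
        have : G = M (k+1) + (G - M (k+1)) := by abel
        calc ‖G‖ = ‖M (k+1) + (G - M (k+1))‖ := by rw [← this]
          _ ≤ ‖M (k+1)‖ + ‖G - M (k+1)‖ := norm_add_le _ _
      have hGP : frobNorm G - (1 + sr) * frobNorm (G - M (k+1)) ≤ (Gᵀ * P).trace := by
        rw [hsplit, hnuc]
        have hexp : (1 + sr) * frobNorm (G - M (k+1))
            = frobNorm (G - M (k+1)) + sr * frobNorm (G - M (k+1)) := by ring
        have hcomm : frobNorm (G - M (k+1)) * sr = sr * frobNorm (G - M (k+1)) := by ring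
        rw [hcomm] at hlow
        linarith
      have h2' : η * (frobNorm G - (1 + sr) * frobNorm (G - M (k+1))) ≤ η * (Gᵀ * P).trace :=
        mul_le_mul_of_nonneg_left hGP hη.le
      calc (-η) * (Gᵀ * P).trace = -(η * (Gᵀ * P).trace) := by ring
        _ ≤ -(η * (frobNorm G - (1 + sr) * frobNorm (G - M (k+1)))) := by linarith
        _ = -(η * frobNorm G) + η * (1 + sr) * frobNorm (G - M (k+1)) := by ring
    -- norm of the step
    have hDn : frobNorm D ≤ η * (sr + 1/2) := by
      rw [hD, muon_frobNorm_eq_norm]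
      calc ‖(-(η * lam)) • W k + (-η) • P‖
          ≤ ‖(-(η * lam)) • W k‖ + ‖(-η) • P‖ := norm_add_le _ _
        _ = (η * lam) * frobNorm (W k) + η * sr := by
            rw [norm_smul, norm_smul, Real.norm_eq_abs, Real.norm_eq_abs,
              abs_neg, abs_neg, abs_of_nonneg (mul_nonneg hη.le hlam0), abs_of_pos hη,
              ← muon_frobNorm_eq_norm, ← muon_frobNorm_eq_norm, hP]
        _ ≤ η * (sr + 1/2) := by
            have hlw := hlamW k hk
            have h5 : η * (lam * frobNorm (W k)) ≤ η * (1 / 2) :=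
              mul_le_mul_of_nonneg_left hlw hη.le
            have e : (η * lam) * frobNorm (W k) = η * (lam * frobNorm (W k)) := by ring
            rw [e]
            linarith
    have hD2 : L * frobNorm D ^ 2 / 2 ≤ L * (η * (sr + 1/2)) ^ 2 / 2 := by
      have h := pow_le_pow_left₀ (muon_frobNorm_nonneg D) hDn 2
      have h6 := mul_le_mul_of_nonneg_left h hL0
      linarith
    rw [hip] at hdes
    linarith
  -- telescoping
  have htel : ∀ k : ℕ, k ≤ T + 1 →
      F (W k) + η / 2 * ∑ s ∈ Finset.range k, frobNorm (gradF (W s)) ≤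
        F (W 0) + η * (1 + sr) * ∑ s ∈ Finset.range k, frobNorm (gradF (W s) - M (s+1))
          + (k:ℝ) * (L * (η * (sr + 1/2)) ^ 2 / 2) := by
    intro k
    induction k with
    | zero => intro _; simp
    | succ k ih =>
      intro hk
      have hk' : k ≤ T := by omega
      have ihh := ih (by omega)
      have hs := hstep k hk'
      rw [Finset.sum_range_succ, Finset.sum_range_succ]
      push_cast
      have e1 : η / 2 * ((∑ s ∈ Finset.range k, frobNorm (gradF (W s))) + frobNorm (gradF (W k)))
          = η / 2 * (∑ s ∈ Finset.range k, frobNorm (gradF (W s)))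
            + η / 2 * frobNorm (gradF (W k)) := by ring
      have e2 : η * (1 + sr) *
            ((∑ s ∈ Finset.range k, frobNorm (gradF (W s) - M (s+1)))
              + frobNorm (gradF (W k) - M (k+1)))
          = η * (1 + sr) * (∑ s ∈ Finset.range k, frobNorm (gradF (W s) - M (s+1)))
            + η * (1 + sr) * frobNorm (gradF (W k) - M (k+1)) := by ring
      have e3 : ((k:ℝ) + 1) * (L * (η * (sr + 1/2)) ^ 2 / 2)
          = (k:ℝ) * (L * (η * (sr + 1/2)) ^ 2 / 2) + L * (η * (sr + 1/2)) ^ 2 / 2 := by ring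
      rw [e1, e2, e3]
      linarith
  -- conclusion
  set S1 : ℝ := ∑ t ∈ Finset.range (T + 1), frobNorm (gradF (W t)) with hS1
  set S2 : ℝ := ∑ t ∈ Finset.range (T + 1), frobNorm (gradF (W t) - M (t + 1)) with hS2
  have hS1n : 0 ≤ S1 := Finset.sum_nonneg fun i _ => muon_frobNorm_nonneg _
  have hS2n : 0 ≤ S2 := Finset.sum_nonneg fun i _ => muon_frobNorm_nonneg _
  have hkey := htel (T+1) le_rfl
  have hF0 : 0 ≤ F (W 0) - Fstar := by linarith [hFstar (W 0)]
  have hFT := hFstar (W (T+1))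
  set c : ℝ := sr + 1/2 with hc
  have hc0 : 0 < c := by rw [hc]; linarith
  have key : η / 2 * S1 ≤ (F (W 0) - Fstar) + η * (1 + sr) * S2
      + ((T:ℝ) + 1) * (L * (η * c) ^ 2 / 2) := by
    push_cast at hkey
    linarith
  have hT1 : (0:ℝ) < (T:ℝ) + 1 := by linarith
  have hmul : (0:ℝ) < 2 / (η * ((T:ℝ) + 1)) := by positivity
  have e1 : (1 / ((T:ℝ) + 1)) * S1 = (2 / (η * ((T:ℝ) + 1))) * (η / 2 * S1) := by
    field_simp
  have step2 : (2 / (η * ((T:ℝ) + 1))) * (η / 2 * S1) ≤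
      (2 / (η * ((T:ℝ) + 1))) * ((F (W 0) - Fstar) + η * (1 + sr) * S2
        + ((T:ℝ) + 1) * (L * (η * c) ^ 2 / 2)) :=
    mul_le_mul_of_nonneg_left key hmul.le
  have e2 : (2 / (η * ((T:ℝ) + 1))) * ((F (W 0) - Fstar) + η * (1 + sr) * S2
        + ((T:ℝ) + 1) * (L * (η * c) ^ 2 / 2))
      = 2 * (F (W 0) - Fstar) / (η * ((T:ℝ) + 1)) + (2 * (1 + sr) / ((T:ℝ) + 1)) * S2
        + L * η * c ^ 2 := by
    field_simp
  have p1 : 2 * (F (W 0) - Fstar) / (η * ((T:ℝ) + 1)) ≤ 2 * (F (W 0) - Fstar) / ((T:ℝ) * η) := by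
    apply div_le_div_of_nonneg_left (by linarith) (by positivity) (by nlinarith)
  have p2 : (2 * (1 + sr) / ((T:ℝ) + 1)) * S2 ≤ (4 * sr / ((T:ℝ) + 1)) * S2 := by
    have h7 : 2 * (1 + sr) ≤ 4 * sr := by linarith
    have h8 : 2 * (1 + sr) / ((T:ℝ) + 1) ≤ 4 * sr / ((T:ℝ) + 1) :=
      div_le_div_of_nonneg_right h7 hT1.le
    exact mul_le_mul_of_nonneg_right h8 hS2n
  calc (1 / ((T:ℝ) + 1)) * S1
      = (2 / (η * ((T:ℝ) + 1))) * (η / 2 * S1) := e1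
    _ ≤ _ := step2
    _ = 2 * (F (W 0) - Fstar) / (η * ((T:ℝ) + 1)) + (2 * (1 + sr) / ((T:ℝ) + 1)) * S2
        + L * η * c ^ 2 := e2
    _ ≤ 2 * (F (W 0) - Fstar) / ((T:ℝ) * η) + (4 * sr / ((T:ℝ) + 1)) * S2 + L * η * c ^ 2 := by
        linarith
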